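/- arXiv:cs/0203022 — 2 statements merged into one kernel-verified Lean document; each statement's English description precedes it below -/
import Mathlib

section
/- For every Pos abstraction f over X and every sharing abstraction S over X: γ_Pos(f) ∩ γ_Sh(S) = γ_Pos(f) ∩ γ_Sh(trim(f, S)). -/
open scoped Classical

namespace SharingPaper

/-- Finite first-order terms over an arity-indexed alphabet `F`, with
variables drawn from the countably infinite set `ℕ` (playing the role of `U`). -/
inductive Term (F : ℕ → Type) : Type
  | var : ℕ → Term F
  | app : (n : ℕ) → F n → (Fin n → Term F) → Term F

namespace Term

variable {F : ℕ → Type}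

/-- The set `var(t)` of variables occurring in a term. -/
def vars : Term F → Set ℕ
  | var x => {x}
  | app n _ ts => ⋃ i : Fin n, vars (ts i)

/-- Number of occurrences of the variable `x` in a term. -/
def count (x : ℕ) : Term F → ℕ
  | var y => if y = x then 1 else 0
  | app n _ ts => ∑ i : Fin n, count x (ts i)

/-- `χ(x, t) = min(2, number of occurrences of x in t)`. -/
def chiVar (x : ℕ) (t : Term F) : ℕ := min 2 (t.count x)

/-- `χ(t) = max {χ(x, t) | x ∈ U}`. -/
noncomputable def mult (t : Term F) : ℕ := sSup (Set.range fun x => chiVar x t)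

end Term

variable {F : ℕ → Type}

/-- Substitutions, represented as maps from variables to terms. -/
abbrev Subst (F : ℕ → Type) := ℕ → Term F

namespace Subst

/-- Homomorphic extension of a substitution to terms. -/
def apply (θ : Subst F) : Term F → Term F
  | .var x => θ x
  | .app n f ts => .app n f fun i => apply θ (ts i)

/-- `dom(θ) = {u | θ(u) ≠ u}`. -/
def dom (θ : Subst F) : Set ℕ := {x | θ x ≠ .var x}

/-- `rng(θ) = ∪ {var(θ(u)) | u ∈ dom(θ)}`. -/
def rng (θ : Subst F) : Set ℕ := ⋃ x ∈ dom θ, (θ x).vars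

/-- A genuine substitution has a finite domain. -/
def IsSubst (θ : Subst F) : Prop := (dom θ).Finite

/-- Composition: `(θ ∘ ψ)(u) = θ(ψ(u))`. -/
def comp (θ ψ : Subst F) : Subst F := fun x => θ.apply (ψ x)

/-- `θ` is idempotent iff `dom(θ) ∩ rng(θ) = ∅`. -/
def Idempotent (θ : Subst F) : Prop := dom θ ∩ rng θ = ∅

/-- `θ ≤ ψ` iff `ψ = δ ∘ θ` for some substitution `δ`. -/
def Le (θ ψ : Subst F) : Prop := ∃ δ : Subst F, IsSubst δ ∧ ψ = comp δ θ

/-- `occ(θ, y) = {u ∈ U | y ∈ var(θ(u))}`. -/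
def occ (θ : Subst F) (y : ℕ) : Set ℕ := {u | y ∈ (θ u).vars}

/-- `α_Sh(θ) = {occ(θ, u) ∩ X | u ∈ U}`. -/
def alphaSh (X : Set ℕ) (θ : Subst F) : Set (Set ℕ) :=
  Set.range fun u => occ θ u ∩ X

/-- An assignment `M ⊆ U` models `θ` iff for every `x ↦ t ∈ θ`, `x ∈ M ↔ var(t) ⊆ M`. -/
def Models (M : Set ℕ) (θ : Subst F) : Prop :=
  ∀ x ∈ dom θ, (x ∈ M ↔ (θ x).vars ⊆ M)

/-- `θ` satisfies a Pos abstraction `f` over `X` iff `M ∩ X ∈ f` for every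
assignment `M` that models `θ`. -/
def Satisfies (X : Set ℕ) (θ : Subst F) (f : Set (Set ℕ)) : Prop :=
  ∀ M : Set ℕ, Models M θ → M ∩ X ∈ f

end Subst

/-- The set of unifiers of a set of equations. -/
def unif (E : Set (Term F × Term F)) : Set (Subst F) :=
  {θ | Subst.IsSubst θ ∧ ∀ p ∈ E, θ.apply p.1 = θ.apply p.2}

/-- Most general unifiers. -/
def mgu (E : Set (Term F × Term F)) : Set (Subst F) :=
  {θ ∈ unif E | ∀ ψ ∈ unif E, Subst.Le θ ψ}

/-- Idempotent most general unifiers. -/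
def imgu (E : Set (Term F × Term F)) : Set (Subst F) :=
  {θ ∈ mgu E | Subst.Idempotent θ}

/-- `γ_Sh(S)`. -/
def gammaSh (X : Set ℕ) (S : Set (Set ℕ)) : Set (Set (Term F × Term F)) :=
  {E | E.Finite ∧ ∃ θ ∈ imgu E, Subst.alphaSh X θ ⊆ S}

/-- `γ_Fr(F)`. -/
def gammaFr (Fv : Set ℕ) : Set (Set (Term F × Term F)) :=
  {E | E.Finite ∧ ∃ θ ∈ imgu E, ∀ x ∈ Fv, ∃ y, θ x = Term.var y}

/-- `γ_Lin(L)`. -/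
def gammaLin (L : Set ℕ) : Set (Set (Term F × Term F)) :=
  {E | E.Finite ∧ ∃ θ ∈ imgu E, ∀ x ∈ L, (θ x).mult ≤ 1}

/-- `γ_Pos(f)`. -/
def gammaPos (X : Set ℕ) (f : Set (Set ℕ)) : Set (Set (Term F × Term F)) :=
  {E | E.Finite ∧ ∃ θ ∈ imgu E, Subst.Satisfies X θ f}

/-- `γ_SFL(S, F, L)`. -/
def gammaSFL (X : Set ℕ) (S : Set (Set ℕ)) (Fv L : Set ℕ) :
    Set (Set (Term F × Term F)) :=
  gammaSh X S ∩ gammaFr Fv ∩ gammaLin L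

/-- `var(S) = ∪ {G | G ∈ S}`. -/
def varS {α : Type*} (S : Set (Set α)) : Set α := ⋃ G ∈ S, G

/-- `rel(t, S) = {G ∈ S | var(t) ∩ G ≠ ∅}`. -/
def rel (t : Term F) (S : Set (Set ℕ)) : Set (Set ℕ) :=
  {G ∈ S | t.vars ∩ G ≠ ∅}

/-- Closure `S*`: the least superset of `S` closed under binary unions. -/
def closure {α : Type*} (S : Set (Set α)) : Set (Set α) :=
  ⋂₀ {S' | S ⊆ S' ∧ ∀ G1 ∈ S', ∀ G2 ∈ S', G1 ∪ G2 ∈ S'}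

/-- Pairwise union `S1 ⊎ S2`. -/
def pairUnion {α : Type*} (S1 S2 : Set (Set α)) : Set (Set α) :=
  {G | ∃ G1 ∈ S1, ∃ G2 ∈ S2, G = G1 ∪ G2}

/-- `S^{*F}`: the least superset `S'` of `S` such that `G1 ∪ G2 ∈ S'` whenever
`G1, G2 ∈ S'` and `G1 ∩ G2 ∩ F = ∅`. -/
def closureF {α : Type*} (Fv : Set α) (S : Set (Set α)) : Set (Set α) :=
  ⋂₀ {S' | S ⊆ S' ∧ ∀ G1 ∈ S', ∀ G2 ∈ S', G1 ∩ G2 ∩ Fv = ∅ → G1 ∪ G2 ∈ S'}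

/-- `S1 ⊎_F S2`. -/
def pairUnionF {α : Type*} (Fv : Set α) (S1 S2 : Set (Set α)) : Set (Set α) :=
  {G | ∃ G1 ∈ S1, ∃ G2 ∈ S2, (G1 ≠ G2 → G1 ∩ G2 ∩ Fv = ∅) ∧ G = G1 ∪ G2}

/-- The Filé decomposition `K_F(S)`. -/
def KF {α : Type*} (Fv : Set α) (S : Set (Set α)) : Set (Set (Set α)) :=
  {B | B ⊆ S ∧ Fv ⊆ varS B ∧
    ∀ G1 ∈ B, ∀ G2 ∈ B, G1 ≠ G2 → G1 ∩ G2 ∩ Fv = ∅}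

/-- Abstract multiplicity `χ(t, S, L)`. -/
noncomputable def chiA (t : Term F) (S : Set (Set ℕ)) (L : Set ℕ) : ℕ :=
  if (∃ x ∈ varS S, Term.chiVar x t = 2) ∨
     (∃ x ∈ varS S, x ∈ t.vars \ L) ∨
     (∃ G ∈ S, ∃ x ∈ t.vars, ∃ y ∈ t.vars, x ≠ y ∧ x ∈ G ∧ y ∈ G)
  then 2 else 1

/-- The term `t` is a variable belonging to the freeness set `Fv` ("t ∈ F"). -/
def IsFreeTerm (t : Term F) (Fv : Set ℕ) : Prop := ∃ x ∈ Fv, t = Term.var x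

/-- The term `t` is a variable ("t ∈ U"). -/
def IsVarTerm (t : Term F) : Prop := ∃ x, t = Term.var x


/-- `trim(f, S) = {G ∈ S | X \ G ∈ f}`. -/
def trim (X : Set ℕ) (f S : Set (Set ℕ)) : Set (Set ℕ) := {G ∈ S | X \ G ∈ f}

lemma vars_apply {F : ℕ → Type} (δ : Subst F) (t : Term F) :
    (δ.apply t).vars = ⋃ z ∈ t.vars, (δ z).vars := by
  induction t with
  | var x => simp [Subst.apply, Term.vars]
  | app n f ts ih =>
    simp only [Subst.apply, Term.vars]
    ext y
    simp only [Set.mem_iUnion, ih]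
    constructor
    · rintro ⟨i, z, hz, hy⟩
      exact ⟨z, ⟨i, hz⟩, hy⟩
    · rintro ⟨z, ⟨i, hz⟩, hy⟩
      exact ⟨i, z, hz, hy⟩

lemma not_dom_eq {F : ℕ → Type} {θ : Subst F} {z : ℕ} (h : z ∉ θ.dom) :
    θ z = Term.var z := not_not.mp h

lemma idem_not_dom {F : ℕ → Type} {θ : Subst F} (h : θ.Idempotent)
    {x z : ℕ} (hx : x ∈ θ.dom) (hz : z ∈ (θ x).vars) : z ∉ θ.dom := by
  intro hzd
  have hrng : z ∈ θ.rng := Set.mem_biUnion hx hz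
  have : z ∈ θ.dom ∩ θ.rng := ⟨hzd, hrng⟩
  rw [h] at this
  exact this

lemma models_iff {F : ℕ → Type} (M : Set ℕ) (θ : Subst F) :
    Subst.Models M θ ↔ ∀ x, (x ∈ M ↔ (θ x).vars ⊆ M) := by
  constructor
  · intro h x
    by_cases hx : x ∈ θ.dom
    · exact h x hx
    · rw [not_dom_eq hx]
      simp [Term.vars]
  · intro h x _; exact h x

/-- Transfer of models between two idempotent substitutions that are instances
of each other. -/
lemma models_transfer {F : ℕ → Type} {θ₁ θ₂ δ δ' : Subst F} {M : Set ℕ}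
    (h1 : θ₁.Idempotent) (h2 : θ₂.Idempotent)
    (e2 : θ₂ = Subst.comp δ θ₁) (e1 : θ₁ = Subst.comp δ' θ₂)
    (hM : Subst.Models M θ₂) : Subst.Models M θ₁ := by
  have hM' : ∀ x, (x ∈ M ↔ (θ₂ x).vars ⊆ M) := (models_iff M θ₂).mp hM
  -- Lemma A
  have lemA : ∀ w ∉ θ₂.dom, ((θ₁ w).vars ⊆ M ↔ w ∈ M) := by
    intro w hw2
    by_cases hw1 : w ∈ θ₁.dom
    · have hθ2w : θ₂ w = Term.var w := not_dom_eq hw2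
      have hcomp : Subst.apply δ (θ₁ w) = Term.var w := by
        rw [← hθ2w, e2]; rfl
      obtain ⟨v, hv⟩ : ∃ v, θ₁ w = Term.var v := by
        cases ht : θ₁ w with
        | var v => exact ⟨v, rfl⟩
        | app n g ts => rw [ht] at hcomp; exact absurd hcomp (by simp [Subst.apply])
      have hvars : (θ₁ w).vars = {v} := by rw [hv]; rfl
      rcases eq_or_ne v w with rfl | hvw
      · simp [hvars]
      · have hvnot1 : v ∉ θ₁.dom := idem_not_dom h1 hw1 (by rw [hvars]; rfl)
        have hθ2v : θ₂ v = Term.var w := by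
          rw [e2]; show Subst.apply δ (θ₁ v) = _
          rw [not_dom_eq hvnot1]
          rw [hv] at hcomp
          exact hcomp
        have : v ∈ M ↔ w ∈ M := by
          rw [hM' v, hθ2v]; simp [Term.vars]
        simpa [hvars] using this
    · rw [not_dom_eq hw1]; simp [Term.vars]
  -- main equivalence
  have key : ∀ x, ((θ₁ x).vars ⊆ M ↔ x ∈ M) := by
    intro x
    constructor
    · intro hz
      by_cases hx1 : x ∈ θ₁.dom
      · rw [hM' x, e2]
        show (Subst.apply δ (θ₁ x)).vars ⊆ M
        rw [vars_apply]
        intro w hw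
        simp only [Set.mem_iUnion] at hw
        obtain ⟨z, hzv, hw⟩ := hw
        have hz2 : z ∉ θ₁.dom := idem_not_dom h1 hx1 hzv
        have : θ₂ z = δ z := by
          rw [e2]; show Subst.apply δ (θ₁ z) = _
          rw [not_dom_eq hz2]; rfl
        exact (hM' z).mp (hz hzv) (this ▸ hw)
      · have : x ∈ M := hz (by rw [not_dom_eq hx1]; exact rfl)
        exact this
    · intro hx
      by_cases hx2 : x ∈ θ₂.dom
      · have hv2 : (θ₂ x).vars ⊆ M := (hM' x).mp hx
        rw [e1]
        show (Subst.apply δ' (θ₂ x)).vars ⊆ M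
        rw [vars_apply]
        intro w hw
        simp only [Set.mem_iUnion] at hw
        obtain ⟨z, hzv, hw⟩ := hw
        have hz2 : z ∉ θ₂.dom := idem_not_dom h2 hx2 hzv
        have hθ1z : θ₁ z = δ' z := by
          rw [e1]; show Subst.apply δ' (θ₂ z) = _
          rw [not_dom_eq hz2]; rfl
        exact (lemA z hz2).mpr (hv2 hzv) (hθ1z ▸ hw)
      · exact (lemA x hx2).mpr hx
  exact (models_iff M θ₁).mpr fun x => (key x).symm

/-- `γ_Pos(f) ∩ γ_Sh(S) = γ_Pos(f) ∩ γ_Sh(trim(f, S))`. -/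
theorem stmt3 {F : ℕ → Type} (X : Set ℕ) (hX : X.Finite)
    (f : Set (Set ℕ)) (hfX : X ∈ f) (hf : ∀ m ∈ f, m ⊆ X)
    (S : Set (Set ℕ)) (hS : ∅ ∈ S) (hSX : ∀ G ∈ S, G ⊆ X) :
    (gammaPos X f ∩ gammaSh X S : Set (Set (Term F × Term F))) =
      gammaPos X f ∩ gammaSh X (trim X f S) := by
  apply Set.eq_of_subset_of_subset
  · rintro E ⟨hPos, hfin, θ₂, hθ₂, hsub⟩
    obtain ⟨θ₁, hθ₁, hsat⟩ := hPos.2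
    -- mutual instances
    obtain ⟨δ, _, e2⟩ := hθ₁.1.2 θ₂ hθ₂.1.1
    obtain ⟨δ', _, e1⟩ := hθ₂.1.2 θ₁ hθ₁.1.1
    have sat₂ : Subst.Satisfies X θ₂ f := fun M hM =>
      hsat M (models_transfer hθ₁.2 hθ₂.2 e2 e1 hM)
    refine ⟨hPos, hfin, θ₂, hθ₂, ?_⟩
    rintro G ⟨y, rfl⟩
    refine ⟨hsub ⟨y, rfl⟩, ?_⟩
    -- the complement of occ θ₂ y is a model of θ₂
    set M : Set ℕ := (Subst.occ θ₂ y)ᶜ with hMdef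
    have hMmod : Subst.Models M θ₂ := by
      intro x hx
      constructor
      · intro hxM z hz
        simp only [hMdef, Set.mem_compl_iff, Subst.occ, Set.mem_setOf_eq]
        have hz2 : z ∉ θ₂.dom := idem_not_dom hθ₂.2 hx hz
        rw [not_dom_eq hz2]
        intro hy
        have : y = z := hy
        subst this
        exact hxM hz
      · intro hall
        simp only [hMdef, Set.mem_compl_iff, Subst.occ, Set.mem_setOf_eq]
        intro hy
        have := hall hy
        simp only [hMdef, Set.mem_compl_iff, Subst.occ, Set.mem_setOf_eq] at this
        have hy2 : y ∉ θ₂.dom := idem_not_dom hθ₂.2 hx hy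
        rw [not_dom_eq hy2] at this
        exact this rfl
    have hMf : M ∩ X ∈ f := sat₂ M hMmod
    have : X \ (Subst.occ θ₂ y ∩ X) = M ∩ X := by
      ext u
      simp only [hMdef, Set.mem_diff, Set.mem_inter_iff, Set.mem_compl_iff]
      tauto
    rw [this]
    exact hMf
  · rintro E ⟨hPos, hfin, θ, hθ, hsub⟩
    exact ⟨hPos, hfin, θ, hθ, fun G hG => (hsub hG).1⟩

end SharingPaper
end

section
/- Let X be a set, F ⊆ X, S a set of subsets of X, B ∈ K_F(S), and R1, R2 ⊆ B. Then R1 ⊎ R2* = R1 ⊎_F R2*. -/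
namespace SharingPaper

open Classical in
lemma subset_closure {α : Type*} (S : Set (Set α)) : S ⊆ closure S := by
  intro x hx S' hS'; exact hS'.1 hx

lemma closure_union_mem {α : Type*} {S : Set (Set α)} {G1 G2 : Set α}
    (h1 : G1 ∈ closure S) (h2 : G2 ∈ closure S) : G1 ∪ G2 ∈ closure S := by
  intro S' hS'; exact hS'.2 _ (h1 S' hS') _ (h2 S' hS')

lemma sup_mem_closure {α : Type*} {S : Set (Set α)} (T : Finset (Set α))
    (hne : T.Nonempty) (hT : ↑T ⊆ S) : T.sup id ∈ closure S := by
  classical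
  induction hne using Finset.Nonempty.cons_induction with
  | singleton a => simpa using subset_closure S (hT (by simp))
  | cons a t ha ht ih =>
      rw [Finset.sup_cons]
      exact closure_union_mem
        (subset_closure S (hT (by simp)))
        (ih (fun x hx => hT (by simp [hx])))

lemma closure_subset_sups {α : Type*} (S : Set (Set α)) :
    closure S ⊆ {G | ∃ T : Finset (Set α), T.Nonempty ∧ ↑T ⊆ S ∧ G = T.sup id} := by
  classical
  intro G hG
  refine hG _ ⟨?_, ?_⟩
  · intro x hx
    exact ⟨{x}, Finset.singleton_nonempty x, by simpa using hx, by simp⟩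
  · rintro G1 ⟨T1, hne1, hT1, rfl⟩ G2 ⟨T2, hne2, hT2, rfl⟩
    exact ⟨T1 ∪ T2, Finset.Nonempty.mono Finset.subset_union_left hne1,
      by simp only [Finset.coe_union]; exact Set.union_subset hT1 hT2,
      by rw [Finset.sup_union]; rfl⟩

lemma mem_finset_sup_sets {α : Type*} {T : Finset (Set α)} {x : α} :
    x ∈ T.sup id ↔ ∃ H ∈ T, x ∈ H := by
  classical
  induction T using Finset.induction with
  | empty => simp
  | insert _ _ h ih => simp [Finset.sup_insert, ih]

/-- if `B ∈ K_F(S)` and `R1, R2 ⊆ B` then `R1 ⊎ R2* = R1 ⊎_F R2*`. -/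
theorem stmt13 {α : Type*} (Fv : Set α) (S : Set (Set α))
    (B : Set (Set α)) (hB : B ∈ KF Fv S)
    (R1 R2 : Set (Set α)) (hR1 : R1 ⊆ B) (hR2 : R2 ⊆ B) :
    pairUnion R1 (closure R2) = pairUnionF Fv R1 (closure R2) := by
  classical
  obtain ⟨-, -, hpw⟩ := hB
  apply Set.Subset.antisymm
  · rintro G ⟨G1, hG1, G2, hG2, rfl⟩
    obtain ⟨T, hTne, hTsub, rfl⟩ := closure_subset_sups R2 hG2
    have key : ∀ (T' : Finset (Set α)), ↑T' ⊆ R2 → G1 ∉ T' →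
        G1 ∩ T'.sup id ∩ Fv = ∅ := by
      intro T' hsub hnm
      ext x
      simp only [Set.mem_inter_iff, Set.mem_empty_iff_false, iff_false, not_and]
      rintro ⟨hx1, hx2⟩ hxF
      obtain ⟨H, hH, hxH⟩ := mem_finset_sup_sets.1 hx2
      have hne : G1 ≠ H := fun h => hnm (h ▸ hH)
      have hd := hpw G1 (hR1 hG1) H (hR2 (hsub hH)) hne
      have : x ∈ (G1 ∩ H ∩ Fv : Set α) := ⟨⟨hx1, hxH⟩, hxF⟩
      rw [hd] at this
      exact this
    by_cases hmem : G1 ∈ T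
    · by_cases hT1 : T = {G1}
      · subst hT1
        refine ⟨G1, hG1, G1, subset_closure R2 (hTsub (by simp)), ?_, by simp⟩
        intro h; exact absurd rfl h
      · have hT'ne : (T.erase G1).Nonempty := by
          by_contra hcon
          rw [Finset.not_nonempty_iff_eq_empty] at hcon
          apply hT1
          apply Finset.eq_singleton_iff_unique_mem.2
          refine ⟨hmem, fun x hx => ?_⟩
          by_contra hxne
          exact absurd (Finset.mem_erase.2 ⟨hxne, hx⟩) (by simp [hcon])
        have hT'sub : ↑(T.erase G1) ⊆ R2 :=
          fun x hx => hTsub (Finset.erase_subset _ _ hx)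
        refine ⟨G1, hG1, (T.erase G1).sup id,
          sup_mem_closure _ hT'ne hT'sub, ?_, ?_⟩
        · intro _; exact key _ hT'sub (Finset.notMem_erase _ _)
        · ext x
          simp only [Set.mem_union, mem_finset_sup_sets]
          constructor
          · rintro (h | ⟨H, hH, hx⟩)
            · exact Or.inl h
            · by_cases hHG : H = G1
              · exact Or.inl (hHG ▸ hx)
              · exact Or.inr ⟨H, Finset.mem_erase.2 ⟨hHG, hH⟩, hx⟩
          · rintro (h | ⟨H, hH, hx⟩)
            · exact Or.inl h
            · exact Or.inr ⟨H, (Finset.mem_erase.1 hH).2, hx⟩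
    · refine ⟨G1, hG1, T.sup id, sup_mem_closure _ hTne hTsub,
        fun _ => key _ hTsub hmem, rfl⟩
  · rintro G ⟨G1, hG1, G2, hG2, -, rfl⟩
    exact ⟨G1, hG1, G2, hG2, rfl⟩

end SharingPaper
end
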